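/- (Lemma 2 key step) Suppose at a reconfiguration time τ the weight gap satisfies W*(τ) − ⟨L(τ), S(τ)⟩ < h(W*(t_k)) where h(x) = g(x − NT) − N(A_max+1)T and t_k ≤ τ ≤ t_k + T. Then for every τ' ∈ [τ, t_k + T], the gap satisfies W*(τ') − ⟨L(τ'), S(τ)⟩ ≤ g(W*(τ')), so the g-adaptive policy does not reconfigure within [τ, t_k + T]. -/

import Mathlib

noncomputable def schedWeight {N : ℕ} (L : Matrix (Fin N) (Fin N) ℝ)
    (σ : Equiv.Perm (Fin N)) : ℝ := ∑ i, L i (σ i)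

noncomputable def maxWeight {N : ℕ} (L : Matrix (Fin N) (Fin N) ℝ) : ℝ :=
  Finset.univ.sup' Finset.univ_nonempty (fun σ : Equiv.Perm (Fin N) => schedWeight L σ)

/-- Lemma 2 key step: if at a reconfiguration time `τ ∈ [t_k, t_k + T]` the weight gap
of the newly installed schedule `S(τ)` satisfies
`W*(τ) − ⟨L(τ), S(τ)⟩ < h(W*(t_k))` with `h(x) = g(x − NT) − N(A_max+1)T`, then for
every `τ' ∈ [τ, t_k + T]` the gap satisfies `W*(τ') − ⟨L(τ'), S(τ)⟩ ≤ g(W*(τ'))`,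
so the `g`-adaptive policy does not reconfigure within `[τ, t_k + T]`. -/
theorem stmt11 (N : ℕ) (A_max : ℝ) (hAmax : 0 ≤ A_max)
    (L A D : ℕ → Matrix (Fin N) (Fin N) ℝ)
    (hevol : ∀ t, L (t + 1) = L t - D t + A t)
    (hA : ∀ t i j, 0 ≤ A t i j ∧ A t i j ≤ A_max)
    (hD : ∀ t i j, D t i j = 0 ∨ D t i j = 1)
    (g : ℝ → ℝ) (hg_mono : StrictMono g)
    (hg_sub : Filter.Tendsto (fun x => g x / x) Filter.atTop (nhds 0))
    (T : ℕ) (tk τ : ℕ) (htk : tk ≤ τ) (hτ : τ ≤ tk + T)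
    (Sτ : Equiv.Perm (Fin N))
    (hgap : maxWeight (L τ) - schedWeight (L τ) Sτ
        < g (maxWeight (L tk) - (N : ℝ) * T) - (N : ℝ) * (A_max + 1) * T) :
    ∀ τ' : ℕ, τ ≤ τ' → τ' ≤ tk + T →
      maxWeight (L τ') - schedWeight (L τ') Sτ ≤ g (maxWeight (L τ')) := by
  -- per-step bounds on any schedule's weight
  have hstepU : ∀ t (σ : Equiv.Perm (Fin N)),
      schedWeight (L (t+1)) σ ≤ schedWeight (L t) σ + N * A_max := by
    intro t σ
    have he : schedWeight (L (t+1)) σ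
        = ∑ i, (L t i (σ i) - D t i (σ i) + A t i (σ i)) := by
      simp [schedWeight, hevol t, Matrix.sub_apply, Matrix.add_apply]
    rw [he, schedWeight]
    have hle : ∑ i, (L t i (σ i) - D t i (σ i) + A t i (σ i))
        ≤ ∑ i : Fin N, (L t i (σ i) + A_max) := by
      apply Finset.sum_le_sum
      intro i _
      have h1 := (hA t i (σ i)).2
      have h2 : 0 ≤ D t i (σ i) := by rcases hD t i (σ i) with h | h <;> simp [h]
      linarith
    have heq : ∑ i : Fin N, (L t i (σ i) + A_max)
        = (∑ i, L t i (σ i)) + N * A_max := by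
      rw [Finset.sum_add_distrib, Finset.sum_const, Finset.card_univ,
        Fintype.card_fin, nsmul_eq_mul]
    linarith
  have hstepL : ∀ t (σ : Equiv.Perm (Fin N)),
      schedWeight (L t) σ - N ≤ schedWeight (L (t+1)) σ := by
    intro t σ
    have he : schedWeight (L (t+1)) σ
        = ∑ i, (L t i (σ i) - D t i (σ i) + A t i (σ i)) := by
      simp [schedWeight, hevol t, Matrix.sub_apply, Matrix.add_apply]
    rw [he, schedWeight]
    have hle : ∑ i : Fin N, (L t i (σ i) - 1)
        ≤ ∑ i, (L t i (σ i) - D t i (σ i) + A t i (σ i)) := by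
      apply Finset.sum_le_sum
      intro i _
      have h1 := (hA t i (σ i)).1
      have h2 : D t i (σ i) ≤ 1 := by rcases hD t i (σ i) with h | h <;> simp [h]
      linarith
    have heq : ∑ i : Fin N, (L t i (σ i) - 1)
        = (∑ i, L t i (σ i)) - N := by
      rw [Finset.sum_sub_distrib, Finset.sum_const, Finset.card_univ,
        Fintype.card_fin, nsmul_eq_mul, mul_one]
    linarith
  -- per-step bounds on maxWeight
  have hMU : ∀ t, maxWeight (L (t+1)) ≤ maxWeight (L t) + N * A_max := by
    intro t
    apply Finset.sup'_le
    intro σ _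
    calc schedWeight (L (t+1)) σ ≤ schedWeight (L t) σ + N * A_max := hstepU t σ
      _ ≤ maxWeight (L t) + N * A_max := by
          have := Finset.le_sup' (fun σ : Equiv.Perm (Fin N) => schedWeight (L t) σ)
            (Finset.mem_univ σ)
          exact add_le_add_left this _
  have hML : ∀ t, maxWeight (L t) - N ≤ maxWeight (L (t+1)) := by
    intro t
    rw [sub_le_iff_le_add]
    apply Finset.sup'_le
    intro σ _
    have h1 := hstepL t σ
    have h2 : schedWeight (L (t+1)) σ ≤ maxWeight (L (t+1)) :=
      Finset.le_sup' (fun σ : Equiv.Perm (Fin N) => schedWeight (L (t+1)) σ)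
        (Finset.mem_univ σ)
    linarith
  -- gap grows by at most N(A_max+1) per slot
  have hgapiter : ∀ m : ℕ,
      maxWeight (L (τ + m)) - schedWeight (L (τ + m)) Sτ
        ≤ maxWeight (L τ) - schedWeight (L τ) Sτ + m * ((N : ℝ) * (A_max + 1)) := by
    intro m
    induction m with
    | zero => simp
    | succ m ih =>
      have h1 := hMU (τ + m)
      have h2 := hstepL (τ + m) Sτ
      push_cast
      have : τ + (m + 1) = (τ + m) + 1 := by ring
      rw [this]
      linarith
  -- maxWeight decreases by at most N per slot
  have hWiter : ∀ m : ℕ,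
      maxWeight (L tk) - m * (N : ℝ) ≤ maxWeight (L (tk + m)) := by
    intro m
    induction m with
    | zero => simp
    | succ m ih =>
      have h1 := hML (tk + m)
      push_cast
      have : tk + (m + 1) = (tk + m) + 1 := by ring
      rw [this]
      linarith
  intro τ' hττ' hτ'T
  have hm1 : τ + (τ' - τ) = τ' := by omega
  have hm2 : tk + (τ' - tk) = τ' := by omega
  have hG := hgapiter (τ' - τ); rw [hm1] at hG
  have hW := hWiter (τ' - tk); rw [hm2] at hW
  have hc1 : ((τ' - τ : ℕ) : ℝ) ≤ (T : ℝ) := by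
    exact_mod_cast Nat.cast_le.mpr (by omega : τ' - τ ≤ T)
  have hc2 : ((τ' - tk : ℕ) : ℝ) ≤ (T : ℝ) := by
    exact_mod_cast Nat.cast_le.mpr (by omega : τ' - tk ≤ T)
  have hNA : (0 : ℝ) ≤ (N : ℝ) * (A_max + 1) := by positivity
  have hN0 : (0 : ℝ) ≤ (N : ℝ) := by positivity
  have key1 : maxWeight (L τ') - schedWeight (L τ') Sτ
      < g (maxWeight (L tk) - (N : ℝ) * T) := by
    have : ((τ' - τ : ℕ) : ℝ) * ((N : ℝ) * (A_max + 1))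
        ≤ (T : ℝ) * ((N : ℝ) * (A_max + 1)) := by
      exact mul_le_mul_of_nonneg_right hc1 hNA
    nlinarith
  have key2 : g (maxWeight (L tk) - (N : ℝ) * T) ≤ g (maxWeight (L τ')) := by
    apply hg_mono.monotone
    have : ((τ' - tk : ℕ) : ℝ) * (N : ℝ) ≤ (T : ℝ) * (N : ℝ) :=
      mul_le_mul_of_nonneg_right hc2 hN0
    nlinarith
  linarith
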